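/- Let p be a prime number, let μ_p denote the group of p-th roots of unity in Q̄_ℓ^×, and endow Z̄_ℓ^×/μ_p with the quotient topology from the subspace topology on Z̄_ℓ^× ⊆ Q̄_ℓ^×. Then every compact subgroup of Z̄_ℓ^×/μ_p is contained in the image of O_E^× under the quotient map for some finite subextension E of Q̄_ℓ/ℚ_ℓ containing μ_p, i.e. is contained in O_E^×/μ_p. -/

import Mathlib

/-! Setup: `K` plays the role of `Q̄_ℓ`: an algebraic closure of `ℚ_ℓ`, viewed as a
normed field whose norm extends the `ℓ`-adic absolute value (this determines the
topology, such an extension being unique).  `ZbarUnits K` is the group `Z̄_ℓ^×`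
of units of `Z̄_ℓ`, i.e. elements of absolute value one; `pRoots K p` is the
group `μ_p` of `p`-th roots of unity; `unitBall l K E` is `O_E^×`.  The quotient
`↥(ZbarUnits K) ⧸ (pRoots K p).subgroupOf (ZbarUnits K)` is `Z̄_ℓ^×/μ_p` with its
quotient topology. -/

/-- `Z̄_ℓ^×`, the subgroup of `Kˣ` of elements of absolute value `1`. -/
def ZbarUnits (K : Type*) [NormedField K] : Subgroup Kˣ where
  carrier := {x | ‖(x : K)‖ = 1}
  one_mem' := by simp
  mul_mem' := by
    rintro a b ha hb
    simp only [Set.mem_setOf_eq] at *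
    simp [ha, hb]
  inv_mem' := by
    rintro a ha
    simp only [Set.mem_setOf_eq] at *
    simp [ha]

/-- `μ_p`, the group of `p`-th roots of unity in `Kˣ`. -/
def pRoots (K : Type*) [Field K] (p : ℕ) : Subgroup Kˣ where
  carrier := {x | x ^ p = 1}
  one_mem' := one_pow p
  mul_mem' := by
    rintro a b ha hb
    simp only [Set.mem_setOf_eq] at *
    rw [mul_pow, ha, hb, mul_one]
  inv_mem' := by
    rintro a ha
    simp only [Set.mem_setOf_eq] at *
    rw [inv_pow, ha, inv_one]

/-- `O_E^×`, the unit group of the ring of integers `O_E = E ∩ Z̄_ℓ` of a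
subextension `E`, realized as the subgroup of `Kˣ` of elements of `E` of
absolute value `1`. -/
def unitBall (l : ℕ) [Fact l.Prime] (K : Type*) [NormedField K] [Algebra ℚ_[l] K]
    (E : IntermediateField ℚ_[l] K) : Subgroup Kˣ where
  carrier := {x | (x : K) ∈ E ∧ ‖(x : K)‖ = 1}
  one_mem' := ⟨by simpa using E.one_mem, by simp⟩
  mul_mem' := by
    rintro a b ⟨haE, ha⟩ ⟨hbE, hb⟩
    exact ⟨by simpa using E.mul_mem haE hbE, by simp [ha, hb]⟩
  inv_mem' := by
    rintro a ⟨haE, ha⟩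
    exact ⟨by simpa using E.inv_mem haE, by simp [ha]⟩

lemma unitBall_le_ZbarUnits (l : ℕ) [Fact l.Prime] (K : Type*) [NormedField K]
    [Algebra ℚ_[l] K] (E : IntermediateField ℚ_[l] K) :
    unitBall l K E ≤ ZbarUnits K := fun _ hx => hx.2


open IntermediateField

section PowLe

theorem aux_pow_le {x y C : ℝ} (hx : 0 ≤ x) (hy : 0 ≤ y)
    (h : ∀ n : ℕ, 0 < n → x ^ n ≤ C * y ^ n) : x ≤ y := by
  rcases eq_or_lt_of_le hy with h0 | hy0
  · have h1 := h 1 one_pos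
    rw [← h0] at h1
    simpa [← h0] using h1
  · by_contra hlt
    push_neg at hlt
    have hr : 1 < x / y := (one_lt_div hy0).2 hlt
    obtain ⟨n, hn⟩ := pow_unbounded_of_one_lt C hr
    have h2 := h (n + 1) (Nat.succ_pos n)
    have h3 : C < (x / y) ^ (n + 1) :=
      lt_of_lt_of_le hn (pow_le_pow_right₀ hr.le (Nat.le_succ n))
    rw [div_pow, lt_div_iff₀ (by positivity)] at h3
    exact absurd h2 (not_le.2 h3)

end PowLe

section NormEq

variable {𝕜 : Type*} [NontriviallyNormedField 𝕜] [CompleteSpace 𝕜]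
    {A : Type*} [Field A] [Algebra 𝕜 A] [FiniteDimensional 𝕜 A]
    {K' : Type*} [NormedField K'] [Algebra 𝕜 K']

theorem aux_norm_le (hK' : ∀ c : 𝕜, ‖algebraMap 𝕜 K' c‖ = ‖c‖)
    (f g : A →ₐ[𝕜] K') (a : A) : ‖f a‖ ≤ ‖g a‖ := by
  letI : NormedField A := NormedField.induced A K' g.toRingHom g.toRingHom.injective
  letI : NormedSpace 𝕜 K' := { norm_smul_le := fun c x => le_of_eq (by rw [Algebra.smul_def, norm_mul, hK']) }
  have hA : ∀ (c : 𝕜) (x : A), ‖c • x‖ ≤ ‖c‖ * ‖x‖ := by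
    intro c x
    have h1 : ‖c • x‖ = ‖g (c • x)‖ := rfl
    rw [h1, map_smul, Algebra.smul_def, norm_mul, hK']
    exact le_of_eq rfl
  letI : NormedSpace 𝕜 A := { norm_smul_le := hA }
  have cont : Continuous f.toLinearMap := f.toLinearMap.continuous_of_finiteDimensional
  let F : A →L[𝕜] K' := ⟨f.toLinearMap, cont⟩
  have hb : ∀ x : A, ‖f x‖ ≤ ‖F‖ * ‖g x‖ := fun x => F.le_opNorm x
  apply aux_pow_le (norm_nonneg _) (norm_nonneg _)
  intro n _
  calc ‖f a‖ ^ n = ‖f (a ^ n)‖ := by rw [map_pow, norm_pow]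
    _ ≤ ‖F‖ * ‖g (a ^ n)‖ := hb (a ^ n)
    _ = ‖F‖ * ‖g a‖ ^ n := by rw [map_pow, norm_pow]

theorem aux_norm_eq (hK' : ∀ c : 𝕜, ‖algebraMap 𝕜 K' c‖ = ‖c‖)
    (f g : A →ₐ[𝕜] K') (a : A) : ‖f a‖ = ‖g a‖ :=
  le_antisymm (aux_norm_le hK' f g a) (aux_norm_le hK' g f a)

end NormEq

section GI

variable {l : ℕ} [Fact l.Prime] {K : Type*} [NormedField K] [Algebra ℚ_[l] K]
  [IsAlgClosure ℚ_[l] K]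

theorem aux_isAlgebraic : Algebra.IsAlgebraic ℚ_[l] K := IsAlgClosure.isAlgebraic

theorem aux_GI (hnorm : ∀ x : ℚ_[l], ‖algebraMap ℚ_[l] K x‖ = ‖x‖)
    (σ : K →ₐ[ℚ_[l]] K) (x : K) : ‖σ x‖ = ‖x‖ := by
  haveI : Algebra.IsAlgebraic ℚ_[l] K := aux_isAlgebraic
  have hint : IsIntegral ℚ_[l] x := (Algebra.IsAlgebraic.isAlgebraic x).isIntegral
  haveI : FiniteDimensional ℚ_[l] ℚ_[l]⟮x⟯ := IntermediateField.adjoin.finiteDimensional hint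
  have := aux_norm_eq hnorm (σ.comp (ℚ_[l]⟮x⟯).val) (ℚ_[l]⟮x⟯).val
    (IntermediateField.AdjoinSimple.gen ℚ_[l] x)
  simpa using this

end GI

section Ultra

variable {l : ℕ} [Fact l.Prime] {K : Type*} [NormedField K] [Algebra ℚ_[l] K]

theorem aux_norm_natCast (hnorm : ∀ x : ℚ_[l], ‖algebraMap ℚ_[l] K x‖ = ‖x‖) (m : ℕ) :
    ‖(m : K)‖ = ‖(m : ℚ_[l])‖ := by
  rw [← map_natCast (algebraMap ℚ_[l] K) m, hnorm]

theorem aux_ultra (hnorm : ∀ x : ℚ_[l], ‖algebraMap ℚ_[l] K x‖ = ‖x‖) :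
    IsUltrametricDist K := by
  apply IsUltrametricDist.isUltrametricDist_of_forall_norm_natCast_le_one
  intro n
  rw [aux_norm_natCast hnorm]
  exact_mod_cast Padic.norm_int_le_one (n : ℤ)

theorem aux_norm_sub_le_max [IsUltrametricDist K] (x y : K) : ‖x - y‖ ≤ max ‖x‖ ‖y‖ := by
  rw [sub_eq_add_neg]
  simpa [norm_neg] using IsUltrametricDist.norm_add_le_max x (-y)

/-- If `‖ζ‖ ≤ 1`, `ζ ≠ 1` and `ζ ^ m = 1` then `‖(m : K)‖ ≤ ‖ζ - 1‖`. -/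
theorem aux_bin (hnorm : ∀ x : ℚ_[l], ‖algebraMap ℚ_[l] K x‖ = ‖x‖)
    {ζ : K} (hζ1 : ‖ζ‖ ≤ 1) (hne : ζ ≠ 1) {m : ℕ} (hm : ζ ^ m = 1) :
    ‖(m : K)‖ ≤ ‖ζ - 1‖ := by
  haveI := aux_ultra hnorm
  rcases Nat.eq_zero_or_pos m with rfl | hm0
  · simpa using norm_nonneg (ζ - 1)
  have hm2 : 2 ≤ m := by
    by_contra h
    push_neg at h
    interval_cases m
    simp at hm
    exact hne hm
  set u := ζ - 1 with hu
  have hu0 : u ≠ 0 := sub_ne_zero.2 hne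
  have hule : ‖u‖ ≤ 1 := by
    refine (aux_norm_sub_le_max ζ 1).trans ?_
    simp [hζ1]
  have key : (u + 1) ^ m = 1 := by rw [hu]; simpa using hm
  rw [add_pow] at key
  have key2 : ∑ k ∈ Finset.range (m + 1), u ^ k * (m.choose k : K) = 1 := by
    simpa using key
  set f : ℕ → K := fun k => u ^ k * (m.choose k : K) with hf
  set w : K := ∑ k ∈ Finset.range (m - 1), u ^ k * (m.choose (2 + k) : K) with hw
  have split : ∑ k ∈ Finset.range (m + 1), f k = 1 + u * (m : K) + u ^ 2 * w := by
    rw [Finset.range_eq_Ico,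
      Finset.sum_eq_sum_Ico_succ_bot (by omega : 0 < m + 1) f,
      Finset.sum_eq_sum_Ico_succ_bot (by omega : 1 < m + 1) f,
      Finset.sum_Ico_eq_sum_range]
    have h2 : m + 1 - 2 = m - 1 := by omega
    rw [h2]
    have hsum : ∑ k ∈ Finset.range (m - 1), f (2 + k)
        = u ^ 2 * w := by
      rw [hw, Finset.mul_sum]
      refine Finset.sum_congr rfl fun k _ => ?_
      show u ^ (2 + k) * (m.choose (2 + k) : K) = u ^ 2 * (u ^ k * (m.choose (2 + k) : K))
      rw [pow_add]
      ring
    rw [hsum, hf]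
    simp
    ring
  rw [split] at key2
  -- u * m = - (u^2 * w)
  have hmu : u * (m : K) = -(u ^ 2 * w) := by linear_combination key2
  have hw1 : ‖w‖ ≤ 1 := by
    rw [hw]
    refine IsUltrametricDist.norm_sum_le_of_forall_le_of_nonneg zero_le_one fun i _ => ?_
    rw [norm_mul, norm_pow]
    calc ‖u‖ ^ i * ‖(m.choose (2 + i) : K)‖ ≤ 1 * 1 := by
          refine mul_le_mul ?_ ?_ (norm_nonneg _) zero_le_one
          · exact pow_le_one₀ (norm_nonneg u) hule
          · exact IsUltrametricDist.norm_natCast_le_one K _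
      _ = 1 := mul_one 1
  have : ‖u‖ * ‖(m : K)‖ ≤ ‖u‖ * (‖u‖ * ‖w‖) := by
    have h1 : ‖u * (m : K)‖ = ‖u‖ * ‖(m : K)‖ := norm_mul _ _
    have h2 : ‖-(u ^ 2 * w)‖ = ‖u‖ * (‖u‖ * ‖w‖) := by
      rw [norm_neg, norm_mul, norm_pow]; ring
    rw [← h1, ← h2, hmu]
  have hupos : 0 < ‖u‖ := norm_pos_iff.2 hu0
  have : ‖(m : K)‖ ≤ ‖u‖ * ‖w‖ := le_of_mul_le_mul_left this hupos
  calc ‖(m : K)‖ ≤ ‖u‖ * ‖w‖ := this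
    _ ≤ ‖u‖ * 1 := by
        exact mul_le_mul_of_nonneg_left hw1 (norm_nonneg u)
    _ = ‖u‖ := mul_one _

/-- Any root of unity `ζ ≠ 1` satisfies `‖ζ - 1‖ ≥ 1/l`. -/
theorem aux_root_unity (hnorm : ∀ x : ℚ_[l], ‖algebraMap ℚ_[l] K x‖ = ‖x‖)
    {ζ : K} (hne : ζ ≠ 1) {m : ℕ} (hm0 : 0 < m) (hm : ζ ^ m = 1) :
    ((l : ℝ))⁻¹ ≤ ‖ζ - 1‖ := by
  haveI := aux_ultra hnorm
  have hl1 : (1:ℝ) < l := by exact_mod_cast (Fact.out : l.Prime).one_lt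
  have hζnorm : ‖ζ‖ = 1 := by
    have h1 : ‖ζ‖ ^ m = 1 := by rw [← norm_pow, hm, norm_one]
    rcases lt_trichotomy ‖ζ‖ 1 with h | h | h
    · exact absurd h1 (by
        have := pow_lt_one₀ (norm_nonneg ζ) h hm0.ne'
        linarith)
    · exact h
    · exact absurd h1 (by
        have := one_lt_pow₀ h hm0.ne'
        linarith)
  induction m using Nat.strong_induction_on with
  | _ m ih =>
    by_cases hdvd : l ∣ m
    · obtain ⟨m₁, rfl⟩ := hdvd
      have hm₁0 : 0 < m₁ := by
        rcases Nat.eq_zero_or_pos m₁ with rfl | h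
        · simp at hm0
        · exact h
      by_cases hθ : ζ ^ m₁ = 1
      · exact ih m₁ (by
          have : 2 ≤ l := (Fact.out : l.Prime).two_le
          calc m₁ < 2 * m₁ := by omega
            _ ≤ l * m₁ := by exact Nat.mul_le_mul_right m₁ this) hm₁0 hθ
      · -- θ := ζ ^ m₁, θ ^ l = 1, θ ≠ 1
        have hθl : (ζ ^ m₁) ^ l = 1 := by
          rw [← pow_mul, mul_comm]; exact hm
        have h1 : ‖(l : K)‖ ≤ ‖ζ ^ m₁ - 1‖ :=
          aux_bin hnorm (by rw [norm_pow, hζnorm, one_pow]) hθ hθl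
        have h2 : ‖(l : K)‖ = ((l : ℝ))⁻¹ := by
          rw [aux_norm_natCast hnorm]
          exact_mod_cast Padic.norm_p
        have h3 : ‖ζ ^ m₁ - 1‖ ≤ ‖ζ - 1‖ := by
          have hgeo : ζ ^ m₁ - 1 = (∑ i ∈ Finset.range m₁, ζ ^ i) * (ζ - 1) := geom_sum_mul ζ m₁ |>.symm
          rw [hgeo, norm_mul]
          have hs : ‖∑ i ∈ Finset.range m₁, ζ ^ i‖ ≤ 1 := by
            refine IsUltrametricDist.norm_sum_le_of_forall_le_of_nonneg zero_le_one fun i _ => ?_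
            rw [norm_pow, hζnorm, one_pow]
          calc ‖∑ i ∈ Finset.range m₁, ζ ^ i‖ * ‖ζ - 1‖ ≤ 1 * ‖ζ - 1‖ :=
                mul_le_mul_of_nonneg_right hs (norm_nonneg _)
            _ = ‖ζ - 1‖ := one_mul _
        rw [← h2]
        exact h1.trans h3
    · -- l does not divide m
      have h1 : ‖(m : K)‖ ≤ ‖ζ - 1‖ := aux_bin hnorm hζnorm.le hne hm
      have h2 : ‖(m : K)‖ = 1 := by
        rw [aux_norm_natCast hnorm]
        have hle : ‖((m : ℤ) : ℚ_[l])‖ ≤ 1 := Padic.norm_int_le_one _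
        have hlt : ¬ ‖((m : ℤ) : ℚ_[l])‖ < 1 := by
          rw [Padic.norm_intCast_lt_one_iff]
          exact_mod_cast hdvd
        push_cast at hle hlt ⊢
        linarith
      calc ((l:ℝ))⁻¹ ≤ 1 := inv_le_one_of_one_le₀ hl1.le
        _ = ‖(m : K)‖ := h2.symm
        _ ≤ ‖ζ - 1‖ := h1

end Ultra

open Polynomial

section Conj

/-- In an algebraically closed algebraic extension, any root of the minimal polynomial of `x`
is the image of `x` under some endomorphism. -/
theorem aux_conj {F K : Type*} [Field F] [Field K] [Algebra F K] [IsAlgClosed K]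
    [Algebra.IsAlgebraic F K] {x y : K} (hy : (Polynomial.aeval y) (minpoly F x) = 0) :
    ∃ σ : K →ₐ[F] K, σ x = y := by
  refine IntermediateField.exists_algHom_of_splits_of_aeval (fun s => ?_) hy
  exact ⟨(Algebra.IsAlgebraic.isAlgebraic s).isIntegral, IsAlgClosed.splits _⟩

variable {l : ℕ} [Fact l.Prime] {K : Type*} [NormedField K] [Algebra ℚ_[l] K]
  [IsAlgClosure ℚ_[l] K]

/-- Coefficients of a product of linear factors with roots of norm at most one. -/
theorem aux_coeff_prod [IsUltrametricDist K] (R : Multiset K) (hR : ∀ r ∈ R, ‖r‖ ≤ 1) :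
    ∀ i, ‖((R.map fun a => X - C a).prod).coeff i‖ ≤ 1 := by
  induction R using Multiset.induction_on with
  | empty =>
    intro i
    simp only [Multiset.map_zero, Multiset.prod_zero, coeff_one]
    split <;> simp
  | cons a R ih =>
    intro i
    have ha : ‖a‖ ≤ 1 := hR a (Multiset.mem_cons_self a R)
    have ih' := ih (fun r hr => hR r (Multiset.mem_cons_of_mem hr))
    rw [Multiset.map_cons, Multiset.prod_cons, mul_comm]
    set q := (R.map fun a => X - C a).prod with hq
    rcases Nat.eq_zero_or_pos i with rfl | hi
    · rw [Polynomial.mul_coeff_zero]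
      simp only [coeff_sub, coeff_X_zero, coeff_C, if_pos rfl, zero_sub, mul_neg, norm_neg,
        norm_mul]
      calc ‖q.coeff 0‖ * ‖a‖ ≤ 1 * 1 :=
            mul_le_mul (ih' 0) ha (norm_nonneg _) zero_le_one
        _ = 1 := mul_one 1
    · obtain ⟨j, rfl⟩ := Nat.exists_eq_add_of_lt hi
      rw [zero_add]
      rw [Polynomial.coeff_mul_X_sub_C]
      refine (aux_norm_sub_le_max _ _).trans ?_
      refine max_le (ih' j) ?_
      rw [norm_mul]
      calc ‖q.coeff (j + 1)‖ * ‖a‖ ≤ 1 * 1 :=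
            mul_le_mul (ih' (j + 1)) ha (norm_nonneg _) zero_le_one
        _ = 1 := mul_one 1

/-- All the roots (in `K`) of the minimal polynomial of an element of norm `≤ 1` have
norm `≤ 1`. -/
theorem aux_minpoly_coeff (hnorm : ∀ x : ℚ_[l], ‖algebraMap ℚ_[l] K x‖ = ‖x‖)
    {x : K} (hx : ‖x‖ ≤ 1) (i : ℕ) : ‖(minpoly ℚ_[l] x).coeff i‖ ≤ 1 := by
  haveI := aux_ultra hnorm
  haveI : Algebra.IsAlgebraic ℚ_[l] K := aux_isAlgebraic
  haveI : IsAlgClosed K := IsAlgClosure.isAlgClosed ℚ_[l]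
  set p := minpoly ℚ_[l] x with hp
  set P := p.map (algebraMap ℚ_[l] K) with hP
  have hmono : P.Monic := (minpoly.monic ((Algebra.IsAlgebraic.isAlgebraic x).isIntegral)).map _
  have hsplit : P.Splits :=
    IsAlgClosed.splits P
  have hprod : P = (P.roots.map fun a => X - C a).prod :=
    hsplit.eq_prod_roots_of_monic hmono
  have hroots : ∀ r ∈ P.roots, ‖r‖ ≤ 1 := by
    intro r hr
    have hr0 : Polynomial.aeval r p = 0 := by
      have := Polynomial.isRoot_of_mem_roots hr
      rwa [Polynomial.IsRoot, hP, Polynomial.eval_map, ← Polynomial.aeval_def] at this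
    obtain ⟨σ, hσ⟩ := aux_conj (F := ℚ_[l]) hr0
    rw [← hσ, aux_GI hnorm σ x]
    exact hx
  have hcoeff : ‖P.coeff i‖ ≤ 1 := by
    rw [hprod]
    exact aux_coeff_prod P.roots hroots i
  rw [hP, Polynomial.coeff_map] at hcoeff
  rwa [← hnorm (p.coeff i)]

end Conj

section RootExtract

variable {l : ℕ} [Fact l.Prime] {K : Type*} [NormedField K] [Algebra ℚ_[l] K]
  [IsAlgClosure ℚ_[l] K]

theorem aux_norm_one_of_near [IsUltrametricDist K] {z : K} (h : ‖z - 1‖ < 1) : ‖z‖ = 1 := by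
  have h1 : ‖z‖ ≤ 1 := by
    have : z = (z - 1) + 1 := by ring
    rw [this]
    refine (IsUltrametricDist.norm_add_le_max _ _).trans ?_
    simp only [norm_one, max_le_iff]
    exact ⟨h.le, le_refl 1⟩
  have h2 : (1 : ℝ) ≤ ‖z‖ := by
    by_contra hc
    push_neg at hc
    have heq : (1 : K) = z - (z - 1) := by ring
    have h3 := aux_norm_sub_le_max z (z - 1)
    rw [← heq, norm_one] at h3
    rcases max_cases ‖z‖ ‖z - 1‖ with ⟨he, _⟩ | ⟨he, _⟩ <;> rw [he] at h3 <;> linarith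
  linarith

/-- Root extraction: if `z` is close to `1` and some positive power of `z` lies in a
subextension `F'`, then `z ∈ F'`. -/
theorem aux_root_extract (hnorm : ∀ x : ℚ_[l], ‖algebraMap ℚ_[l] K x‖ = ‖x‖)
    (F' : IntermediateField ℚ_[l] K) {z : K} (hz : ‖z - 1‖ < ((l : ℝ))⁻¹)
    {m : ℕ} (hm0 : 0 < m) (hzm : z ^ m ∈ F') : z ∈ F' := by
  haveI := aux_ultra hnorm
  haveI : Algebra.IsAlgebraic ℚ_[l] K := aux_isAlgebraic
  haveI : IsAlgClosed K := IsAlgClosure.isAlgClosed ℚ_[l]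
  haveI : Algebra.IsAlgebraic (↥F') K := Algebra.IsAlgebraic.tower_top (K := ℚ_[l]) ↥F'
  have hl1 : ((l : ℝ))⁻¹ ≤ 1 := by
    have : (1:ℝ) ≤ l := by exact_mod_cast (Fact.out : l.Prime).one_le
    exact inv_le_one_of_one_le₀ this
  have hznorm : ‖z‖ = 1 := aux_norm_one_of_near (lt_of_lt_of_le hz hl1)
  have hz0 : z ≠ 0 := by
    intro h
    rw [h, norm_zero] at hznorm
    norm_num at hznorm
  by_contra hzF
  haveI : NoZeroSMulDivisors (↥F') K :=
    inferInstance
  -- minimal polynomial of z over F' has a second root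
  have hint : IsIntegral (↥F') z := (Algebra.IsAlgebraic.isAlgebraic z).isIntegral
  have hsep : (minpoly (↥F') z).Separable := Algebra.IsSeparable.isSeparable _ _
  have hq2 : 2 ≤ (minpoly (↥F') z).natDegree := by
    rw [minpoly.two_le_natDegree_iff hint]
    rintro ⟨y, rfl⟩
    exact hzF (y.2)
  have hcard : 1 < Fintype.card ((minpoly (↥F') z).rootSet K) := by
    rw [Polynomial.card_rootSet_eq_natDegree hsep (IsAlgClosed.splits _)]
    omega
  have hzmem : z ∈ (minpoly (↥F') z).rootSet K := by
    rw [Polynomial.mem_rootSet]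
    exact ⟨minpoly.ne_zero hint, minpoly.aeval _ _⟩
  obtain ⟨y, hy⟩ := Fintype.exists_ne_of_one_lt_card hcard ⟨z, hzmem⟩
  have hyne : (y : K) ≠ z := by
    intro h
    exact hy (Subtype.ext h)
  have hyroot : (Polynomial.aeval (y : K)) (minpoly (↥F') z) = 0 :=
    (Polynomial.mem_rootSet.mp y.2).2
  obtain ⟨σ, hσ⟩ := aux_conj (F := ↥F') hyroot
  -- σ fixes z ^ m
  have hfix : σ (z ^ m) = z ^ m := by
    have : z ^ m = algebraMap (↥F') K ⟨z ^ m, hzm⟩ := rfl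
    rw [this, AlgHom.commutes]
  have hym : (y : K) ^ m = z ^ m := by
    rw [← hσ, ← map_pow, hfix]
  -- ζ = y / z is a nontrivial root of unity
  set ζ := (y : K) * z⁻¹ with hζ
  have hζm : ζ ^ m = 1 := by
    rw [hζ, mul_pow, hym, inv_pow, mul_inv_cancel₀ (pow_ne_zero m hz0)]
  have hζne : ζ ≠ 1 := by
    rw [hζ]
    intro h
    apply hyne
    field_simp at h
    exact h
  have hlow : ((l : ℝ))⁻¹ ≤ ‖ζ - 1‖ := aux_root_unity hnorm hζne hm0 hζm
  -- but y is close to z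
  have hdist : ‖(y : K) - z‖ = ‖ζ - 1‖ := by
    have : (y : K) - z = z * (ζ - 1) := by
      rw [hζ]
      field_simp
    rw [this, norm_mul, hznorm, one_mul]
  have hup : ‖(y : K) - z‖ ≤ ‖z - 1‖ := by
    have hGI := aux_GI hnorm (σ.restrictScalars ℚ_[l])
    have hy' : (y : K) = σ (z - 1) - (z - 1) + z := by
      rw [map_sub, hσ]
      have : σ (1 : K) = 1 := map_one σ
      rw [this]
      ring
    have : (y : K) - z = σ (z - 1) - (z - 1) := by rw [hy']; ring
    rw [this]
    refine (aux_norm_sub_le_max _ _).trans ?_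
    have : ‖σ (z - 1)‖ = ‖z - 1‖ := hGI (z - 1)
    rw [this, max_self]
  rw [hdist] at hup
  linarith [lt_of_le_of_lt (hlow.trans hup) hz]

end RootExtract

section Bounded

open IntermediateField

variable {l : ℕ} [Fact l.Prime] {K : Type*} [NormedField K] [Algebra ℚ_[l] K]
  [IsAlgClosure ℚ_[l] K]

/-- A multiplicatively closed set of elements near `1` with bounded degree is contained
in a single finite subextension. -/
theorem aux_bdd (hnorm : ∀ x : ℚ_[l], ‖algebraMap ℚ_[l] K x‖ = ‖x‖)
    {V : Set K} (hV1 : (1 : K) ∈ V)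
    (hmul : ∀ z ∈ V, ∀ w ∈ V, z * w ∈ V)
    (hnear : ∀ z ∈ V, ‖z - 1‖ < ((l : ℝ))⁻¹)
    {n : ℕ} (hdeg : ∀ z ∈ V, Module.finrank ℚ_[l] ℚ_[l]⟮z⟯ ≤ n) :
    ∃ w₀ ∈ V, ∀ z ∈ V, z ∈ ℚ_[l]⟮w₀⟯ := by
  haveI := aux_ultra hnorm
  haveI : Algebra.IsAlgebraic ℚ_[l] K := aux_isAlgebraic
  have hl1 : ((l : ℝ))⁻¹ ≤ 1 := by
    have : (1:ℝ) ≤ l := by exact_mod_cast (Fact.out : l.Prime).one_le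
    exact inv_le_one_of_one_le₀ this
  have hnz : ∀ z ∈ V, z ≠ 0 := by
    intro z hz h0
    have := aux_norm_one_of_near (lt_of_lt_of_le (hnear z hz) hl1)
    rw [h0, norm_zero] at this
    norm_num at this
  have hpow : ∀ z ∈ V, ∀ a : ℕ, z ^ a ∈ V := by
    intro z hz a
    induction a with
    | zero => simpa using hV1
    | succ a ih => rw [pow_succ]; exact hmul _ ih _ hz
  -- pick w₀ of maximal degree
  set T : Set ℕ := {d | ∃ z ∈ V, Module.finrank ℚ_[l] ℚ_[l]⟮z⟯ = d} with hT
  have hTne : T.Nonempty := ⟨_, 1, hV1, rfl⟩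
  have hTbdd : BddAbove T := by
    refine ⟨n, fun d hd => ?_⟩
    obtain ⟨z, hz, rfl⟩ := hd
    exact hdeg z hz
  obtain ⟨w₀, hw₀V, hw₀D⟩ := Nat.sSup_mem hTne hTbdd
  set D := sSup T with hD
  have hmax : ∀ z ∈ V, Module.finrank ℚ_[l] ℚ_[l]⟮z⟯ ≤ D := fun z hz =>
    le_csSup hTbdd ⟨z, hz, rfl⟩
  refine ⟨w₀, hw₀V, fun z hz => ?_⟩
  -- the big field L
  set L : IntermediateField ℚ_[l] K := IntermediateField.adjoin ℚ_[l] {w₀, z} with hL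
  have hw₀L : w₀ ∈ L := IntermediateField.subset_adjoin _ _ (Set.mem_insert _ _)
  have hzL : z ∈ L := IntermediateField.subset_adjoin _ _ (Set.mem_insert_of_mem _ rfl)
  haveI : FiniteDimensional ℚ_[l] ↥L := by
    haveI : Finite ({w₀, z} : Set K) := Set.toFinite _
    exact IntermediateField.finiteDimensional_adjoin fun x _ =>
      (Algebra.IsAlgebraic.isAlgebraic x).isIntegral
  haveI : Finite (IntermediateField ℚ_[l] ↥L) :=
    (Field.exists_primitive_element_iff_finite_intermediateField ℚ_[l] ↥L).mp
      ⟨inferInstance, Field.exists_primitive_element ℚ_[l] ↥L⟩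
  -- pigeonhole on the fields generated by w₀ * z ^ a
  set η : ℕ → ↥L := fun a => ⟨w₀, hw₀L⟩ * ⟨z, hzL⟩ ^ a with hη
  set ψ : ℕ → IntermediateField ℚ_[l] ↥L := fun a => ℚ_[l]⟮η a⟯ with hψdef
  obtain ⟨a, b, hab, hψ⟩ := Finite.exists_ne_map_eq_of_infinite ψ
  -- reduce to the ordered case
  have key : ∀ a b : ℕ, a < b → ψ a = ψ b → z ∈ ℚ_[l]⟮w₀⟯ := by
    intro a b hlt hψab
    have hmem_a : η a ∈ ψ a := IntermediateField.mem_adjoin_simple_self _ _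
    have hmem_b : η b ∈ ψ a := by rw [hψab]; exact IntermediateField.mem_adjoin_simple_self _ _
    have hζL0 : (⟨z, hzL⟩ : ↥L) ≠ 0 := by
      intro h
      apply hnz z hz
      exact congrArg Subtype.val h
    have hηa0 : η a ≠ 0 := by
      rw [hη]
      exact mul_ne_zero (by intro h; exact hnz w₀ hw₀V (congrArg Subtype.val h))
        (pow_ne_zero _ hζL0)
    have hζpow : (⟨z, hzL⟩ : ↥L) ^ (b - a) = (η a)⁻¹ * η b := by
      have h1 : η b = η a * (⟨z, hzL⟩ : ↥L) ^ (b - a) := by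
        rw [hη]
        dsimp only
        rw [mul_assoc, ← pow_add]
        congr 2
        omega
      rw [h1, inv_mul_cancel_left₀ hηa0]
    have hζmem : (⟨z, hzL⟩ : ↥L) ^ (b - a) ∈ ψ a := by
      rw [hζpow]
      exact mul_mem (inv_mem hmem_a) hmem_b
    -- map down to K
    set F' : IntermediateField ℚ_[l] K := (ψ a).map L.val with hF'
    have hzmF' : z ^ (b - a) ∈ F' := by
      refine ⟨(⟨z, hzL⟩ : ↥L) ^ (b - a), hζmem, ?_⟩
      push_cast
      rfl
    have hwaV : w₀ * z ^ a ∈ V := hmul _ hw₀V _ (hpow z hz a)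
    have hF'eq : F' = ℚ_[l]⟮w₀ * z ^ a⟯ := by
      rw [hF', hψdef]
      show IntermediateField.map L.val (IntermediateField.adjoin ℚ_[l] {η a}) = _
      rw [IntermediateField.adjoin_map]
      congr 1
      rw [Set.image_singleton]
      congr 1
    have hzF' : z ∈ F' := aux_root_extract hnorm F' (hnear z hz) (by omega) hzmF'
    have hwaF' : w₀ * z ^ a ∈ F' := by
      rw [hF'eq]
      exact IntermediateField.mem_adjoin_simple_self _ _
    have hw₀F' : w₀ ∈ F' := by
      have h1 : w₀ = (w₀ * z ^ a) * (z ^ a)⁻¹ :=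
        (mul_inv_cancel_right₀ (pow_ne_zero a (hnz z hz)) w₀).symm
      rw [h1]
      exact mul_mem hwaF' (inv_mem (pow_mem hzF' a))
    have hle : ℚ_[l]⟮w₀⟯ ≤ F' := by
      rw [IntermediateField.adjoin_simple_le_iff]
      exact hw₀F'
    haveI : FiniteDimensional ℚ_[l] ↥F' := by
      rw [hF'eq]
      exact IntermediateField.adjoin.finiteDimensional
        ((Algebra.IsAlgebraic.isAlgebraic _).isIntegral)
    have hrank : Module.finrank ℚ_[l] ↥F' ≤ Module.finrank ℚ_[l] ↥(ℚ_[l]⟮w₀⟯) := by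
      rw [hw₀D]
      rw [hF'eq]
      exact hmax _ hwaV
    have heq : ℚ_[l]⟮w₀⟯ = F' := IntermediateField.eq_of_le_of_finrank_le hle hrank
    rw [heq]
    exact hzF'
  rcases hab.lt_or_gt with h | h
  · exact key a b h hψ
  · exact key b a h hψ.symm

end Bounded

section CompactMain

open IntermediateField Polynomial

variable {l : ℕ} [Fact l.Prime] {K : Type*} [NormedField K] [Algebra ℚ_[l] K]
  [IsAlgClosure ℚ_[l] K]

theorem aux_deg_of_vec {n : ℕ} {a : K} (f : Fin n → ℚ_[l])
    (heq : a ^ n + ∑ i : Fin n, algebraMap ℚ_[l] K (f i) * a ^ (i : ℕ) = 0) :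
    Module.finrank ℚ_[l] ℚ_[l]⟮a⟯ ≤ n := by
  haveI : Algebra.IsAlgebraic ℚ_[l] K := aux_isAlgebraic
  have hint : IsIntegral ℚ_[l] a := (Algebra.IsAlgebraic.isAlgebraic a).isIntegral
  rcases Nat.eq_zero_or_pos n with rfl | hn
  · simp at heq
  set q : Polynomial ℚ_[l] := X ^ n + ∑ i : Fin n, C (f i) * X ^ (i : ℕ) with hq
  have hsumdeg : (∑ i : Fin n, C (f i) * X ^ (i : ℕ) : Polynomial ℚ_[l]).degree < (n : ℕ) := by
    refine lt_of_le_of_lt (Polynomial.degree_sum_le _ _) ?_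
    rw [Finset.sup_lt_iff (by exact_mod_cast WithBot.bot_lt_coe n)]
    intro i _
    exact lt_of_le_of_lt (Polynomial.degree_C_mul_X_pow_le _ _) (by exact_mod_cast i.2)
  have hqm : q.Monic := Polynomial.monic_X_pow_add hsumdeg
  have haev : Polynomial.aeval a q = 0 := by
    rw [hq, map_add, map_sum, Polynomial.aeval_X_pow]
    convert heq using 2
    refine Finset.sum_congr rfl fun i _ => ?_
    rw [map_mul, Polynomial.aeval_C, Polynomial.aeval_X_pow]
  have hdeg : (minpoly ℚ_[l] a).degree ≤ q.degree := minpoly.min _ _ hqm haev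
  have hqdeg : q.degree ≤ (n : ℕ) := by
    rw [hq]
    refine (Polynomial.degree_add_le _ _).trans ?_
    rw [max_le_iff]
    exact ⟨Polynomial.degree_X_pow_le n, hsumdeg.le⟩
  rw [IntermediateField.adjoin.finrank hint]
  exact Polynomial.natDegree_le_iff_degree_le.mpr (hdeg.trans hqdeg)

/-- Main compactness lemma: a compact multiplicative subgroup of norm-one elements of `K`
is contained in a finite-dimensional subextension. -/
theorem aux_compact_subgroup (hnorm : ∀ x : ℚ_[l], ‖algebraMap ℚ_[l] K x‖ = ‖x‖)
    {A : Set K} (hA : IsCompact A) (h1 : (1 : K) ∈ A)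
    (hmulA : ∀ x ∈ A, ∀ y ∈ A, x * y ∈ A) (hinvA : ∀ x ∈ A, x⁻¹ ∈ A)
    (hnormA : ∀ x ∈ A, ‖x‖ = 1) :
    ∃ E : IntermediateField ℚ_[l] K, FiniteDimensional ℚ_[l] E ∧ ∀ x ∈ A, x ∈ E := by
  haveI := aux_ultra hnorm
  haveI : Algebra.IsAlgebraic ℚ_[l] K := aux_isAlgebraic
  have hl1 : ((l : ℝ))⁻¹ ≤ 1 := by
    have : (1:ℝ) ≤ l := by exact_mod_cast (Fact.out : l.Prime).one_le
    exact inv_le_one_of_one_le₀ this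
  have hl0 : (0:ℝ) < ((l : ℝ))⁻¹ := by
    have : (0:ℝ) < l := by exact_mod_cast (Fact.out : l.Prime).pos
    positivity
  have hcontalg : Continuous (algebraMap ℚ_[l] K) :=
    (AddMonoidHomClass.isometry_of_norm (algebraMap ℚ_[l] K).toAddMonoidHom
      (fun x => hnorm x)).continuous
  -- the space X
  haveI hXcs : CompactSpace A := isCompact_iff_compactSpace.mp hA
  haveI : Nonempty A := ⟨⟨1, h1⟩⟩
  -- the closed cover by degree
  set Cd : ℕ → Set A := fun n => {a : A | ∃ f : Fin n → ℚ_[l],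
    (∀ i, ‖f i‖ ≤ 1) ∧ ((a : K)) ^ n + ∑ i : Fin n, algebraMap ℚ_[l] K (f i) * ((a : K)) ^ (i : ℕ) = 0}
    with hCd
  have hclosed : ∀ n, IsClosed (Cd n) := by
    intro n
    set Z : Set (Fin n → ℚ_[l]) := {f | ∀ i, ‖f i‖ ≤ 1} with hZ
    have hZc : IsCompact Z := by
      have : Z = Set.pi Set.univ (fun _ : Fin n => Metric.closedBall (0 : ℚ_[l]) 1) := by
        ext f
        simp [hZ, Set.mem_pi, Metric.mem_closedBall, dist_zero_right]
      rw [this]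
      exact isCompact_univ_pi fun _ => ProperSpace.isCompact_closedBall _ _
    set F : (Fin n → ℚ_[l]) × A → K := fun q =>
      ((q.2 : K)) ^ n + ∑ i : Fin n, algebraMap ℚ_[l] K (q.1 i) * ((q.2 : K)) ^ (i : ℕ) with hF
    have hFcont : Continuous F := by
      apply Continuous.add
      · exact (continuous_subtype_val.comp continuous_snd).pow n
      · refine continuous_finset_sum _ fun i _ => Continuous.mul ?_ ?_
        · exact hcontalg.comp ((continuous_apply i).comp continuous_fst)
        · exact (continuous_subtype_val.comp continuous_snd).pow _
    set W : Set ((Fin n → ℚ_[l]) × A) := {q | q.1 ∈ Z ∧ F q = 0} with hW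
    have hWclosed : IsClosed W := by
      have h1' : IsClosed {q : (Fin n → ℚ_[l]) × A | q.1 ∈ Z} :=
        (hZc.isClosed).preimage continuous_fst
      have h2' : IsClosed {q : (Fin n → ℚ_[l]) × A | F q = 0} :=
        isClosed_singleton.preimage hFcont
      exact h1'.inter h2'
    have hWcompact : IsCompact W := by
      refine IsCompact.of_isClosed_subset (hZc.prod isCompact_univ) hWclosed ?_
      intro q hq
      exact ⟨hq.1, trivial⟩
    have hCdeq : Cd n = Prod.snd '' W := by
      ext a
      constructor
      · rintro ⟨f, hf1, hf2⟩
        exact ⟨(f, a), ⟨hf1, hf2⟩, rfl⟩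
      · rintro ⟨⟨f, a'⟩, ⟨hf1, hf2⟩, rfl⟩
        exact ⟨f, hf1, hf2⟩
    rw [hCdeq]
    exact (hWcompact.image continuous_snd).isClosed
  have hcover : ⋃ n, Cd n = Set.univ := by
    ext a
    simp only [Set.mem_iUnion, Set.mem_univ, iff_true]
    have hint : IsIntegral ℚ_[l] (a : K) := (Algebra.IsAlgebraic.isAlgebraic _).isIntegral
    set p := minpoly ℚ_[l] (a : K) with hp
    set n := p.natDegree with hn
    refine ⟨n, fun i => p.coeff i, fun i => aux_minpoly_coeff hnorm (le_of_eq (hnormA _ a.2)) i, ?_⟩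
    have haev := minpoly.aeval ℚ_[l] (a : K)
    rw [Polynomial.aeval_eq_sum_range (R := ℚ_[l])] at haev
    rw [Finset.sum_range_succ] at haev
    have hlead : p.coeff n = 1 := by
      have := (minpoly.monic hint).leadingCoeff
      rwa [Polynomial.leadingCoeff] at this
    rw [hlead, one_smul] at haev
    have : ∑ i : Fin n, algebraMap ℚ_[l] K (p.coeff i) * ((a : K)) ^ (i : ℕ)
        = ∑ i ∈ Finset.range n, p.coeff i • ((a : K)) ^ i := by
      rw [← Fin.sum_univ_eq_sum_range (fun i => p.coeff i • ((a : K)) ^ i) n]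
      exact Finset.sum_congr rfl fun i _ => (Algebra.smul_def _ _).symm
    rw [this]
    linear_combination haev
  obtain ⟨N, hN⟩ := nonempty_interior_of_iUnion_of_closed hclosed hcover
  obtain ⟨a₀, ha₀⟩ := hN
  obtain ⟨ρ, hρ0, hball⟩ := Metric.isOpen_iff.mp isOpen_interior a₀ ha₀
  have hballC : Metric.ball a₀ ρ ⊆ Cd N := hball.trans interior_subset
  -- the degree bound on elements of Cd N
  have hdegC : ∀ a : A, a ∈ Cd N → Module.finrank ℚ_[l] ℚ_[l]⟮(a : K)⟯ ≤ N := by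
    rintro a ⟨f, _, hf2⟩
    exact aux_deg_of_vec f hf2
  -- the small subgroup V
  set δ : ℝ := min ρ ((l : ℝ))⁻¹ with hδ
  have hδ0 : 0 < δ := lt_min hρ0 hl0
  set V : Set K := {z ∈ A | ‖z - 1‖ < δ} with hV
  have hVnear : ∀ z ∈ V, ‖z - 1‖ < ((l : ℝ))⁻¹ := fun z hz =>
    lt_of_lt_of_le hz.2 (min_le_right _ _)
  have hVnorm : ∀ z ∈ V, ‖z‖ = 1 := fun z hz =>
    aux_norm_one_of_near (lt_of_lt_of_le (hVnear z hz) hl1)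
  have hV1 : (1 : K) ∈ V := ⟨h1, by simpa using hδ0⟩
  have hVmul : ∀ z ∈ V, ∀ w ∈ V, z * w ∈ V := by
    intro z hz w hw
    refine ⟨hmulA _ hz.1 _ hw.1, ?_⟩
    have hid : z * w - 1 = z * (w - 1) + (z - 1) := by ring
    rw [hid]
    refine lt_of_le_of_lt (IsUltrametricDist.norm_add_le_max _ _) ?_
    rw [max_lt_iff, norm_mul, hVnorm z hz, one_mul]
    exact ⟨hw.2, hz.2⟩
  -- degree bound on V
  have hVdeg : ∀ z ∈ V, Module.finrank ℚ_[l] ℚ_[l]⟮z⟯ ≤ N * N := by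
    intro z hz
    have hzA : z ∈ A := hz.1
    have ha₀A : ((a₀ : K)) ∈ A := a₀.2
    have hprodA : (a₀ : K) * z ∈ A := hmulA _ ha₀A _ hzA
    set az : A := ⟨(a₀ : K) * z, hprodA⟩ with haz
    have hdist : dist az a₀ < ρ := by
      rw [Subtype.dist_eq, dist_eq_norm]
      have : ((az : K)) - ((a₀ : K)) = (a₀ : K) * (z - 1) := by rw [haz]; push_cast; ring
      rw [this, norm_mul, hnormA _ ha₀A, one_mul]
      exact lt_of_lt_of_le hz.2 (min_le_left _ _)
    have hazC : az ∈ Cd N := hballC (Metric.mem_ball.mpr hdist)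
    have ha₀C : a₀ ∈ Cd N := hballC (Metric.mem_ball_self hρ0)
    have h₁ : Module.finrank ℚ_[l] ℚ_[l]⟮(a₀ : K)⟯ ≤ N := hdegC a₀ ha₀C
    have h₂ : Module.finrank ℚ_[l] ℚ_[l]⟮(a₀ : K) * z⟯ ≤ N := hdegC az hazC
    -- z lies in the compositum
    haveI f1 : FiniteDimensional ℚ_[l] ℚ_[l]⟮(a₀ : K)⟯ :=
      IntermediateField.adjoin.finiteDimensional ((Algebra.IsAlgebraic.isAlgebraic _).isIntegral)
    haveI f2 : FiniteDimensional ℚ_[l] ℚ_[l]⟮(a₀ : K) * z⟯ :=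
      IntermediateField.adjoin.finiteDimensional ((Algebra.IsAlgebraic.isAlgebraic _).isIntegral)
    set M := ℚ_[l]⟮(a₀ : K)⟯ ⊔ ℚ_[l]⟮(a₀ : K) * z⟯ with hM
    haveI : FiniteDimensional ℚ_[l] ↥M := IntermediateField.finiteDimensional_sup _ _
    have ha₀0 : (a₀ : K) ≠ 0 := by
      intro h
      have := hnormA _ ha₀A
      rw [h, norm_zero] at this
      norm_num at this
    have hzM : z ∈ M := by
      have h3 : (a₀ : K) ∈ M := le_sup_left (α := IntermediateField ℚ_[l] K)
        (IntermediateField.mem_adjoin_simple_self _ _)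
      have h4 : (a₀ : K) * z ∈ M := le_sup_right (α := IntermediateField ℚ_[l] K)
        (IntermediateField.mem_adjoin_simple_self _ _)
      have h5 : z = ((a₀ : K))⁻¹ * ((a₀ : K) * z) := by
        field_simp
      rw [h5]
      exact mul_mem (inv_mem h3) h4
    have hle : ℚ_[l]⟮z⟯ ≤ M := IntermediateField.adjoin_simple_le_iff.mpr hzM
    have hmono : Module.finrank ℚ_[l] ℚ_[l]⟮z⟯ ≤ Module.finrank ℚ_[l] ↥M := by
      haveI : Module.Finite ℚ_[l]
          ↥(Subalgebra.toSubmodule (M : IntermediateField ℚ_[l] K).toSubalgebra) :=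
        inferInstanceAs (FiniteDimensional ℚ_[l] ↥M)
      have h6 : Subalgebra.toSubmodule (ℚ_[l]⟮z⟯ : IntermediateField ℚ_[l] K).toSubalgebra
          ≤ Subalgebra.toSubmodule (M : IntermediateField ℚ_[l] K).toSubalgebra := by
        intro u hu
        exact hle hu
      exact Submodule.finrank_mono h6
    refine hmono.trans ?_
    refine (IntermediateField.finrank_sup_le _ _).trans ?_
    exact Nat.mul_le_mul h₁ h₂
  -- apply the bounded degree lemma
  obtain ⟨w₀, hw₀V, hVsub⟩ := aux_bdd hnorm hV1 hVmul hVnear hVdeg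
  -- finite subcover of A by δ-balls
  have hcov : A ⊆ ⋃ x ∈ A, Metric.ball x δ := fun x hx =>
    Set.mem_biUnion hx (Metric.mem_ball_self hδ0)
  obtain ⟨t, htA, htfin, htcov⟩ := hA.elim_finite_subcover_image
    (fun x _ => Metric.isOpen_ball) hcov
  -- the final field
  set E : IntermediateField ℚ_[l] K := IntermediateField.adjoin ℚ_[l] ({w₀} ∪ t) with hE
  haveI hEfd : FiniteDimensional ℚ_[l] ↥E := by
    haveI : Finite ({w₀} ∪ t : Set K) := ((Set.finite_singleton w₀).union htfin).to_subtype
    exact IntermediateField.finiteDimensional_adjoin fun x _ =>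
      (Algebra.IsAlgebraic.isAlgebraic x).isIntegral
  refine ⟨E, hEfd, fun y hy => ?_⟩
  obtain ⟨x, hxt, hxball⟩ := Set.mem_iUnion₂.mp (htcov hy)
  have hxA : x ∈ A := htA hxt
  have hx0 : x ≠ 0 := by
    intro h
    have := hnormA _ hxA
    rw [h, norm_zero] at this
    norm_num at this
  have hvy : x⁻¹ * y ∈ V := by
    constructor
    · exact hmulA _ (hinvA _ hxA) _ hy
    · have hxinv : ‖x⁻¹‖ = 1 := by
        rw [norm_inv, hnormA _ hxA, inv_one]
      have : x⁻¹ * y - 1 = x⁻¹ * (y - x) := by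
        field_simp
      rw [this, norm_mul, hxinv, one_mul]
      have := Metric.mem_ball.mp hxball
      rwa [dist_eq_norm] at this
  have hw₀E : ℚ_[l]⟮w₀⟯ ≤ E := by
    rw [IntermediateField.adjoin_simple_le_iff]
    exact IntermediateField.subset_adjoin _ _ (Set.mem_union_left _ rfl)
  have hvE : x⁻¹ * y ∈ E := hw₀E (hVsub _ hvy)
  have hxE : x ∈ E := IntermediateField.subset_adjoin _ _ (Set.mem_union_right _ hxt)
  have : y = x * (x⁻¹ * y) := by field_simp
  rw [this]
  exact mul_mem hxE hvE

end CompactMain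

section Proper

theorem aux_preimage_mk {G : Type*} [Group G] (N : Subgroup G) [N.Normal] (C : Set G) :
    (QuotientGroup.mk : G → G ⧸ N) ⁻¹' (QuotientGroup.mk '' C)
      = ⋃ ν : ↥N, (fun g => g * (ν : G)) '' C := by
  ext x
  simp only [Set.mem_preimage, Set.mem_image, Set.mem_iUnion]
  constructor
  · rintro ⟨c, hc, hmk⟩
    have h := QuotientGroup.eq.mp hmk
    exact ⟨⟨c⁻¹ * x, h⟩, c, hc, by group⟩
  · rintro ⟨ν, c, hc, rfl⟩
    refine ⟨c, hc, ?_⟩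
    exact QuotientGroup.eq.mpr (by simpa using ν.2)

theorem aux_properMap {G : Type*} [Group G] [TopologicalSpace G] [IsTopologicalGroup G]
    (N : Subgroup G) [N.Normal] [Finite ↥N] :
    IsProperMap (QuotientGroup.mk : G → G ⧸ N) := by
  rw [isProperMap_iff_isClosedMap_and_compact_fibers]
  refine ⟨continuous_quotient_mk', ?_, ?_⟩
  · intro C hC
    have hpre : IsClosed ((QuotientGroup.mk : G → G ⧸ N) ⁻¹' (QuotientGroup.mk '' C)) := by
      rw [aux_preimage_mk]
      exact isClosed_iUnion_of_finite fun ν =>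
        (Homeomorph.mulRight (ν : G)).isClosedMap C hC
    exact (isQuotientMap_quotient_mk').isClosed_preimage.mp hpre
  · intro q
    obtain ⟨g, rfl⟩ := QuotientGroup.mk'_surjective N q
    have h1 : ({(QuotientGroup.mk' N) g} : Set (G ⧸ N))
        = QuotientGroup.mk '' ({g} : Set G) := by
      rw [Set.image_singleton]
      rfl
    rw [h1, aux_preimage_mk]
    refine Set.Finite.isCompact ?_
    exact Set.finite_iUnion fun ν => (Set.finite_singleton g).image _

end Proper
/-- Let `p` be a prime number and `μ_p` the group of `p`-th roots
of unity in `Q̄_ℓ^×`; endow `Z̄_ℓ^×/μ_p` with the quotient topology.  Then every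
compact subgroup of `Z̄_ℓ^×/μ_p` is contained in `O_E^×/μ_p` (the image of
`O_E^×` under the quotient map) for some finite subextension `E` of `Q̄_ℓ/ℚ_ℓ`
containing `μ_p`. -/
theorem compact_subgroup_of_ZbarUnits_mod_pRoots
    {l : ℕ} [Fact l.Prime]
    (K : Type*) [NormedField K] [Algebra ℚ_[l] K] [IsAlgClosure ℚ_[l] K]
    (hnorm : ∀ x : ℚ_[l], ‖algebraMap ℚ_[l] K x‖ = ‖x‖)
    (p : ℕ) (hp : p.Prime)
    (S : Subgroup (↥(ZbarUnits K) ⧸ (pRoots K p).subgroupOf (ZbarUnits K)))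
    (hS : IsCompact (S : Set (↥(ZbarUnits K) ⧸ (pRoots K p).subgroupOf (ZbarUnits K)))) :
    ∃ E : IntermediateField ℚ_[l] K, FiniteDimensional ℚ_[l] E ∧
      (∀ x : Kˣ, x ^ p = 1 → (x : K) ∈ E) ∧
      S ≤ ((QuotientGroup.mk' ((pRoots K p).subgroupOf (ZbarUnits K))).comp
            (Subgroup.inclusion (unitBall_le_ZbarUnits l K E))).range := by
    classical
  haveI : Algebra.IsAlgebraic ℚ_[l] K := aux_isAlgebraic
  set N : Subgroup ↥(ZbarUnits K) := (pRoots K p).subgroupOf (ZbarUnits K) with hN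
  -- finiteness of the p-th roots of unity
  have hRfin : ({y : K | y ^ p = 1} : Set K).Finite := by
    have hne : (Polynomial.X ^ p - Polynomial.C (1 : K)) ≠ 0 :=
      Polynomial.X_pow_sub_C_ne_zero hp.pos 1
    refine Set.Finite.subset (Polynomial.finite_setOf_isRoot hne) ?_
    intro y hy
    simp only [Set.mem_setOf_eq, Polynomial.IsRoot, Polynomial.eval_sub, Polynomial.eval_pow,
      Polynomial.eval_X, Polynomial.eval_C]
    rw [Set.mem_setOf_eq] at hy
    rw [hy]
    ring
  haveI hfinN : Finite ↥N := by
    haveI := hRfin.to_subtype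
    refine Finite.of_injective (fun ν : ↥N =>
      (⟨(((ν : ↥(ZbarUnits K)) : Kˣ) : K), ?_⟩ : {y : K | y ^ p = 1})) ?_
    · have h2 := ν.2
      have h3 : ((ν : ↥(ZbarUnits K)) : Kˣ) ^ p = 1 := Subgroup.mem_subgroupOf.mp h2
      rw [Set.mem_setOf_eq]
      calc (((ν : ↥(ZbarUnits K)) : Kˣ) : K) ^ p = ((((ν : ↥(ZbarUnits K)) : Kˣ) ^ p : Kˣ) : K) :=
            by push_cast; rfl
        _ = 1 := by rw [h3]; rfl
    · intro a b h
      apply Subtype.ext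
      apply Subtype.ext
      apply Units.ext
      exact congrArg Subtype.val h
  -- compactness of the preimage
  have hproper := aux_properMap (G := ↥(ZbarUnits K)) N
  have hHcomp : IsCompact ((QuotientGroup.mk : ↥(ZbarUnits K) → ↥(ZbarUnits K) ⧸ N) ⁻¹'
      (S : Set (↥(ZbarUnits K) ⧸ N))) := hproper.isCompact_preimage hS
  set A : Set K := (fun g : ↥(ZbarUnits K) => ((g : Kˣ) : K)) ''
    ((QuotientGroup.mk : ↥(ZbarUnits K) → ↥(ZbarUnits K) ⧸ N) ⁻¹' (S : Set _)) with hAdef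
  have hAcomp : IsCompact A :=
    hHcomp.image (Units.continuous_val.comp continuous_subtype_val)
  have hmkcoe : ⇑(QuotientGroup.mk' N) = (QuotientGroup.mk : ↥(ZbarUnits K) → _) :=
    QuotientGroup.coe_mk' N
  have hmem_mk : ∀ g : ↥(ZbarUnits K),
      g ∈ (QuotientGroup.mk : ↥(ZbarUnits K) → ↥(ZbarUnits K) ⧸ N) ⁻¹' (S : Set _)
        ↔ (QuotientGroup.mk' N) g ∈ S := by
    intro g
    rw [hmkcoe]
    rfl
  have h1A : (1 : K) ∈ A := by
    refine ⟨1, ?_, rfl⟩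
    rw [hmem_mk, map_one]
    exact S.one_mem
  have hmulA : ∀ x ∈ A, ∀ y ∈ A, x * y ∈ A := by
    rintro x ⟨g, hg, rfl⟩ y ⟨h, hh, rfl⟩
    refine ⟨g * h, ?_, by push_cast; rfl⟩
    rw [hmem_mk, map_mul]
    exact S.mul_mem ((hmem_mk g).mp hg) ((hmem_mk h).mp hh)
  have hinvA : ∀ x ∈ A, x⁻¹ ∈ A := by
    rintro x ⟨g, hg, rfl⟩
    refine ⟨g⁻¹, ?_, ?_⟩
    · rw [hmem_mk, map_inv]
      exact S.inv_mem ((hmem_mk g).mp hg)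
    · push_cast
      rfl
  have hnormA : ∀ x ∈ A, ‖x‖ = 1 := by
    rintro x ⟨g, _, rfl⟩
    exact g.2
  obtain ⟨E₀, hE₀fd, hAE₀⟩ := aux_compact_subgroup hnorm hAcomp h1A hmulA hinvA hnormA
  -- the field E
  haveI : Finite ↥({y : K | y ^ p = 1}) := hRfin.to_subtype
  haveI hadjfd : FiniteDimensional ℚ_[l]
      ↥(IntermediateField.adjoin ℚ_[l] {y : K | y ^ p = 1}) :=
    IntermediateField.finiteDimensional_adjoin fun x _ =>
      (Algebra.IsAlgebraic.isAlgebraic x).isIntegral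
  set E : IntermediateField ℚ_[l] K :=
    E₀ ⊔ IntermediateField.adjoin ℚ_[l] {y : K | y ^ p = 1} with hE
  haveI hEfd : FiniteDimensional ℚ_[l] ↥E := IntermediateField.finiteDimensional_sup _ _
  refine ⟨E, hEfd, ?_, ?_⟩
  · intro x hx
    have hxm : (x : K) ∈ ({y : K | y ^ p = 1} : Set K) := by
      rw [Set.mem_setOf_eq]
      calc (x : K) ^ p = ((x ^ p : Kˣ) : K) := by push_cast; rfl
        _ = 1 := by rw [hx]; rfl
    exact (le_sup_right : IntermediateField.adjoin ℚ_[l] {y : K | y ^ p = 1} ≤ E)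
      (IntermediateField.subset_adjoin _ _ hxm)
  · intro s hs
    obtain ⟨g, rfl⟩ := QuotientGroup.mk'_surjective N s
    have hgpre : g ∈ (QuotientGroup.mk : ↥(ZbarUnits K) → ↥(ZbarUnits K) ⧸ N) ⁻¹' (S : Set _) :=
      (hmem_mk g).mpr hs
    have hgA : ((g : Kˣ) : K) ∈ A := ⟨g, hgpre, rfl⟩
    have hgE : ((g : Kˣ) : K) ∈ E := (le_sup_left : E₀ ≤ E) (hAE₀ _ hgA)
    have hgnorm : ‖((g : Kˣ) : K)‖ = 1 := g.2
    refine ⟨⟨(g : Kˣ), hgE, hgnorm⟩, ?_⟩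
    have hincl : Subgroup.inclusion (unitBall_le_ZbarUnits l K E)
        ⟨(g : Kˣ), hgE, hgnorm⟩ = g := by
      apply Subtype.ext
      rfl
    rw [MonoidHom.comp_apply, hincl]
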